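/- For finite-dimensional complex Hilbert spaces X and Y and operators A, B : Y → X, the trace norm of the partial transpose (transpose on the first factor) of vec(A)·vec(B)* equals ‖A‖₁·‖B‖₁, where vec is the linear map sending the matrix unit E_ij to e_i ⊗ e_j. -/

import Mathlib

open Matrix Kronecker BigOperators ComplexOrder

set_option linter.unusedSectionVars false
noncomputable section

/-- Square root of a positive semidefinite matrix (the definition `Matrix.PosSemidef.sqrt`
of the older Mathlib, removed since). -/
noncomputable def psdSqrtOld {n : Type*} [Fintype n] [DecidableEq n] {A : Matrix n n ℂ}
    (hA : A.PosSemidef) : Matrix n n ℂ :=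
  hA.1.eigenvectorUnitary.1 * diagonal (((↑) ∘ Real.sqrt ∘ hA.1.eigenvalues : n → ℂ)) *
    (star hA.1.eigenvectorUnitary : Matrix n n ℂ)

/-- Trace norm (sum of singular values) of a complex matrix. -/
noncomputable def traceNorm {l m : Type*} [Fintype l] [Fintype m] [DecidableEq m]
    (A : Matrix l m ℂ) : ℝ :=
  ((psdSqrtOld (Matrix.posSemidef_conjTranspose_mul_self A)).trace).re

/-- Frobenius norm. -/
noncomputable def frobNorm {l m : Type*} [Fintype l] [Fintype m]
    (A : Matrix l m ℂ) : ℝ :=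
  Real.sqrt ((Aᴴ * A).trace.re)

/-- Partial transpose on the first tensor factor. -/
def ptranspose {a b : Type*} (X : Matrix (a × b) (a × b) ℂ) : Matrix (a × b) (a × b) ℂ :=
  Matrix.of fun p q => X (q.1, p.2) (p.1, q.2)

/-- Outer product `u v*`. -/
def outer {a : Type*} (u v : a → ℂ) : Matrix a a ℂ :=
  Matrix.of fun p q => u p * star (v q)

/-- Density operator: positive semidefinite with trace one. -/
def IsDensity {a : Type*} [Fintype a] (ρ : Matrix a a ℂ) : Prop :=
  ρ.PosSemidef ∧ ρ.trace = 1

/-- Maximally entangled unit vector in `ℂⁿ ⊗ ℂᵐ`. -/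
def MaxEntangled (n m : ℕ) (u : Fin n × Fin m → ℂ) : Prop :=
  ∃ (x : Fin (min n m) → EuclideanSpace ℂ (Fin n))
    (y : Fin (min n m) → EuclideanSpace ℂ (Fin m)),
    Orthonormal ℂ x ∧ Orthonormal ℂ y ∧
      ∀ p : Fin n × Fin m,
        u p = (1 / Real.sqrt (min n m) : ℝ) * ∑ i, x i p.1 * y i p.2

/-- Extension `Φ ⊗ I` of a matrix map to a system with ancilla `c`. -/
def tensorExt {a b c : Type*} [Fintype a] [DecidableEq a] [Fintype c]
    (Φ : Matrix a a ℂ →ₗ[ℂ] Matrix b b ℂ)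
    (X : Matrix (a × c) (a × c) ℂ) : Matrix (b × c) (b × c) ℂ :=
  Matrix.of fun p q => Φ (Matrix.of fun i j => X (i, p.2) (j, q.2)) p.1 q.1

/-- Quantum channel: completely positive and trace preserving. -/
def IsChannel {a b : Type*} [Fintype a] [DecidableEq a] [Fintype b]
    (Φ : Matrix a a ℂ →ₗ[ℂ] Matrix b b ℂ) : Prop :=
  (∀ X, (Φ X).trace = X.trace) ∧
    ∀ (k : ℕ) (X : Matrix (a × Fin k) (a × Fin k) ℂ),
      X.PosSemidef → (tensorExt Φ X).PosSemidef

/-- Partial trace over the second tensor factor. -/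
def ptraceRight {a b : Type*} [Fintype b] (M : Matrix (a × b) (a × b) ℂ) :
    Matrix a a ℂ :=
  Matrix.of fun i k => ∑ c, M (i, c) (k, c)

/-- Partial trace over the first tensor factor. -/
def ptraceLeft {a b : Type*} [Fintype a] (M : Matrix (a × b) (a × b) ℂ) :
    Matrix b b ℂ :=
  Matrix.of fun i k => ∑ c, M (c, i) (c, k)

/-- Canonical maximally entangled state `τ = (1/d) vec(I)vec(I)*` on `a ⊗ a`. -/
noncomputable def tauGen {a : Type*} [Fintype a] [DecidableEq a] :
    Matrix (a × a) (a × a) ℂ :=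
  Matrix.of fun p q =>
    (Fintype.card a : ℂ)⁻¹ * (if p.1 = p.2 then 1 else 0) * (if q.1 = q.2 then 1 else 0)

/-- The operator `τ ⊗ σ` on `a ⊗ (a ⊗ r)`. -/
noncomputable def tauSigma {a r : Type*} [Fintype a] [DecidableEq a]
    (σ : Matrix r r ℂ) : Matrix (a × (a × r)) (a × (a × r)) ℂ :=
  Matrix.of fun p q => tauGen (p.1, p.2.1) (q.1, q.2.1) * σ p.2.2 q.2.2

/-- Fidelity of two positive semidefinite matrices. -/
noncomputable def fidelity {a : Type*} [Fintype a] [DecidableEq a]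
    {P Q : Matrix a a ℂ} (hP : P.PosSemidef) (hQ : Q.PosSemidef) : ℝ :=
  traceNorm (psdSqrtOld hP * psdSqrtOld hQ)

section PsdSqrtAux

private lemma psdSqrtOld_eq_cfc {n : Type*} [Fintype n] [DecidableEq n] {A : Matrix n n ℂ}
    (hA : A.PosSemidef) : psdSqrtOld hA = cfc Real.sqrt A := by
  rw [hA.1.cfc_eq, Matrix.IsHermitian.cfc, Unitary.conjStarAlgAut_apply]
  rfl

private lemma psdSqrtOld_posSemidef {n : Type*} [Fintype n] [DecidableEq n] {A : Matrix n n ℂ}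
    (hA : A.PosSemidef) : (psdSqrtOld hA).PosSemidef := by
  unfold psdSqrtOld
  rw [star_eq_conjTranspose]
  exact (posSemidef_diagonal_iff.mpr fun i => by
    simp [Complex.zero_le_real, Real.sqrt_nonneg]).mul_mul_conjTranspose_same _

private lemma psdSqrtOld_mul_self {n : Type*} [Fintype n] [DecidableEq n] {A : Matrix n n ℂ}
    (hA : A.PosSemidef) : psdSqrtOld hA * psdSqrtOld hA = A := by
  have hsa : IsSelfAdjoint A := hA.1
  calc psdSqrtOld hA * psdSqrtOld hA = cfc (fun x => Real.sqrt x * Real.sqrt x) A := by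
        rw [psdSqrtOld_eq_cfc, cfc_mul Real.sqrt Real.sqrt A]
    _ = cfc (fun x : ℝ => x) A := by
        apply cfc_congr
        rw [hA.1.spectrum_real_eq_range_eigenvalues]
        rintro _ ⟨i, rfl⟩
        exact Real.mul_self_sqrt (hA.eigenvalues_nonneg i)
    _ = A := cfc_id' ℝ A hsa

private lemma psdSqrtOld_sq {n : Type*} [Fintype n] [DecidableEq n] {A : Matrix n n ℂ}
    (hA : A.PosSemidef) : psdSqrtOld hA ^ 2 = A := by
  rw [pow_two, psdSqrtOld_mul_self]

private lemma psdEqSqrt {n : Type*} [Fintype n] [DecidableEq n] {Q : Matrix n n ℂ}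
    (hQ : Q.PosSemidef) {P : Matrix n n ℂ} (hP : P.PosSemidef) (h : Q ^ 2 = P) :
    Q = psdSqrtOld hP := by
  subst h
  have hsa : IsSelfAdjoint Q := hQ.1
  rw [psdSqrtOld_eq_cfc, ← cfc_comp_pow Real.sqrt 2 Q]
  calc Q = cfc (fun x : ℝ => x) Q := (cfc_id' ℝ Q hsa).symm
    _ = _ := by
        apply cfc_congr
        rw [hQ.1.spectrum_real_eq_range_eigenvalues]
        rintro _ ⟨i, rfl⟩
        exact (Real.sqrt_sq (hQ.eigenvalues_nonneg i)).symm

end PsdSqrtAux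

section AuxLemmas

open Polynomial Matrix

variable {l m p' q' : Type*} [Fintype l] [Fintype m] [DecidableEq l] [DecidableEq m]

private lemma aux_mul_pow_shift (A : Matrix l m ℂ) (B : Matrix m l ℂ) (k : ℕ) :
    A * (B * A) ^ k = (A * B) ^ k * A := by
  induction k with
  | zero => simp
  | succ k ih =>
    rw [pow_succ, pow_succ, ← Matrix.mul_assoc, ih]
    simp only [Matrix.mul_assoc]

private lemma aux_mul_aeval_shift (A : Matrix l m ℂ) (B : Matrix m l ℂ) (p : ℂ[X]) :
    A * (aeval (B * A) p) = (aeval (A * B) p) * A := by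
  induction p using Polynomial.induction_on' with
  | add f g hf hg => simp [map_add, Matrix.mul_add, Matrix.add_mul, hf, hg]
  | monomial k c =>
    simp only [aeval_monomial, Algebra.algebraMap_eq_smul_one, Matrix.smul_mul, Matrix.mul_smul,
      one_mul, aux_mul_pow_shift]

private lemma aux_trace_aeval_shift (A : Matrix l m ℂ) (B : Matrix m l ℂ) (p : ℂ[X])
    (hp : p.coeff 0 = 0) :
    (aeval (A * B) p).trace = (aeval (B * A) p).trace := by
  obtain ⟨q, rfl⟩ := Polynomial.X_dvd_iff.mpr hp
  rw [_root_.map_mul, _root_.map_mul, aeval_X, aeval_X]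
  have h1 : A * B * aeval (A * B) q = A * (B * aeval (A * B) q) := by rw [Matrix.mul_assoc]
  have h2 : B * aeval (A * B) q = (aeval (B * A) q) * B := aux_mul_aeval_shift B A q
  rw [h1, h2, ← Matrix.mul_assoc, Matrix.trace_mul_comm, Matrix.mul_assoc]

private lemma aux_conj_pow (U D : Matrix l l ℂ) (h1 : star U * U = 1) (h2 : U * star U = 1)
    (k : ℕ) : (U * D * star U) ^ k = U * D ^ k * star U := by
  induction k with
  | zero => simpa using h2.symm
  | succ k ih =>
    rw [pow_succ, ih, pow_succ]
    calc U * D ^ k * star U * (U * D * star U)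
        = U * D ^ k * (star U * U) * D * star U := by simp only [mul_assoc]
      _ = U * (D ^ k * D) * star U := by rw [h1]; simp only [mul_one, mul_assoc]

private lemma aux_aeval_conj (U D : Matrix l l ℂ) (h1 : star U * U = 1) (h2 : U * star U = 1)
    (p : ℂ[X]) : aeval (U * D * star U) p = U * aeval D p * star U := by
  induction p using Polynomial.induction_on' with
  | add f g hf hg => simp [map_add, hf, hg, mul_add, add_mul]
  | monomial k c =>
    simp only [aeval_monomial, Algebra.algebraMap_eq_smul_one, smul_mul_assoc, one_mul,
      aux_conj_pow U D h1 h2 k, mul_smul_comm]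

private lemma aux_aeval_diagonal (d : l → ℂ) (p : ℂ[X]) :
    aeval (Matrix.diagonal d) p = Matrix.diagonal fun i => p.eval (d i) := by
  induction p using Polynomial.induction_on' with
  | add f g hf hg =>
    simp only [map_add, hf, hg, eval_add, diagonal_add]
  | monomial k c =>
    simp only [aeval_monomial, Algebra.algebraMap_eq_smul_one, smul_mul_assoc, one_mul,
      diagonal_pow, eval_monomial]
    rw [← diagonal_smul]
    congr 1

private lemma aux_sqrt_eq_aeval {P : Matrix l l ℂ} (hP : P.PosSemidef) (p : ℂ[X])
    (h : ∀ i, p.eval ((hP.1.eigenvalues i : ℝ) : ℂ) = ((Real.sqrt (hP.1.eigenvalues i) : ℝ) : ℂ)) :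
    (psdSqrtOld hP) = aeval P p := by
  have hU1 : star ((hP.1.eigenvectorUnitary : Matrix l l ℂ)) * (hP.1.eigenvectorUnitary : Matrix l l ℂ) = 1 :=
    Matrix.mem_unitaryGroup_iff'.mp (hP.1.eigenvectorUnitary).2
  have hU2 : (hP.1.eigenvectorUnitary : Matrix l l ℂ) * star ((hP.1.eigenvectorUnitary : Matrix l l ℂ)) = 1 :=
    Matrix.mem_unitaryGroup_iff.mp (hP.1.eigenvectorUnitary).2
  conv_rhs => rw [hP.1.spectral_theorem, Unitary.conjStarAlgAut_apply]
  rw [aux_aeval_conj _ _ hU1 hU2, aux_aeval_diagonal]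
  have hfun : (fun i => Polynomial.eval ((RCLike.ofReal ∘ hP.1.eigenvalues) i) p)
      = ((↑) ∘ Real.sqrt ∘ hP.1.eigenvalues : l → ℂ) := by
    funext i
    simpa using h i
  rw [hfun]
  rfl

private lemma aux_trace_sqrt_swap (A : Matrix l m ℂ) :
    (psdSqrtOld (Matrix.posSemidef_conjTranspose_mul_self A)).trace
      = (psdSqrtOld (Matrix.posSemidef_self_mul_conjTranspose A)).trace := by
  classical
  set h1 := Matrix.posSemidef_conjTranspose_mul_self A with hh1
  set h2 := Matrix.posSemidef_self_mul_conjTranspose A with hh2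
  set s : Finset ℂ := insert 0
    ((Finset.univ.image fun i => ((h1.1.eigenvalues i : ℝ) : ℂ)) ∪
     (Finset.univ.image fun i => ((h2.1.eigenvalues i : ℝ) : ℂ))) with hs
  set r : ℂ → ℂ := fun z => ((Real.sqrt z.re : ℝ) : ℂ) with hr
  set p := Lagrange.interpolate s id r with hp
  have hinj : Set.InjOn (id : ℂ → ℂ) s := Function.injective_id.injOn
  have heval : ∀ z ∈ s, p.eval z = r z := fun z hz =>
    Lagrange.eval_interpolate_at_node r hinj hz
  have h1s : (psdSqrtOld h1) = aeval (Aᴴ * A) p := by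
    apply aux_sqrt_eq_aeval
    intro i
    rw [heval _ (by
      apply Finset.mem_insert_of_mem
      apply Finset.mem_union_left
      exact Finset.mem_image_of_mem _ (Finset.mem_univ i))]
    simp [hr]
  have h2s : (psdSqrtOld h2) = aeval (A * Aᴴ) p := by
    apply aux_sqrt_eq_aeval
    intro i
    rw [heval _ (by
      apply Finset.mem_insert_of_mem
      apply Finset.mem_union_right
      exact Finset.mem_image_of_mem _ (Finset.mem_univ i))]
    simp [hr]
  have hp0 : p.coeff 0 = 0 := by
    rw [Polynomial.coeff_zero_eq_eval_zero, heval 0 (Finset.mem_insert_self _ _)]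
    simp [hr]
  rw [h1s, h2s]
  exact (aux_trace_aeval_shift A Aᴴ p hp0).symm

private lemma aux_sqrt_congr {P Q : Matrix l l ℂ} (h : P = Q) (hP : P.PosSemidef)
    (hQ : Q.PosSemidef) : (psdSqrtOld hP) = (psdSqrtOld hQ) := by subst h; rfl

private lemma aux_traceNorm_eq (S : Matrix l m ℂ) {P : Matrix m m ℂ} (hP : P.PosSemidef)
    (h : Sᴴ * S = P) : traceNorm S = (psdSqrtOld hP).trace.re := by
  unfold traceNorm
  rw [aux_sqrt_congr h (Matrix.posSemidef_conjTranspose_mul_self S) hP]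

private lemma aux_im_trace_sqrt {P : Matrix l l ℂ} (hP : P.PosSemidef) :
    (psdSqrtOld hP).trace.im = 0 := by
  have hherm : (psdSqrtOld hP).IsHermitian := (psdSqrtOld_posSemidef hP).1
  have := Matrix.trace_conjTranspose (psdSqrtOld hP)
  rw [hherm] at this
  have : (starRingEnd ℂ) (psdSqrtOld hP).trace = (psdSqrtOld hP).trace := this.symm
  exact (Complex.conj_eq_iff_im.mp this)

end AuxLemmas

section AuxLemmas2

open Polynomial Matrix Kronecker

variable {l m p' q' l' m' : Type*} [Fintype l] [Fintype m] [Fintype p'] [Fintype q']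
  [Fintype l'] [Fintype m']
  [DecidableEq l] [DecidableEq m] [DecidableEq p'] [DecidableEq q'] [DecidableEq m']

private lemma aux_ct_t (A : Matrix l m ℂ) : (Aᵀ)ᴴ = (Aᴴ)ᵀ := rfl

private lemma aux_kron_conjTranspose (A : Matrix l m ℂ) (B : Matrix p' q' ℂ) :
    (A ⊗ₖ B)ᴴ = Aᴴ ⊗ₖ Bᴴ := by
  ext ⟨i, j⟩ ⟨k, o⟩
  simp [Matrix.conjTranspose_apply, Matrix.kroneckerMap_apply, mul_comm]

private lemma aux_psd_kron {P : Matrix l l ℂ} {Q : Matrix m m ℂ} (hP : P.PosSemidef)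
    (hQ : Q.PosSemidef) : (P ⊗ₖ Q).PosSemidef := by
  exact hP.kronecker hQ

private lemma aux_sqrt_kron {P : Matrix l l ℂ} {Q : Matrix m m ℂ} (hP : P.PosSemidef)
    (hQ : Q.PosSemidef) : (psdSqrtOld (aux_psd_kron hP hQ)) = (psdSqrtOld hP) ⊗ₖ (psdSqrtOld hQ) := by
  refine (psdEqSqrt (aux_psd_kron (psdSqrtOld_posSemidef hP) (psdSqrtOld_posSemidef hQ)) _ ?_).symm
  rw [pow_two, ← Matrix.mul_kronecker_mul, psdSqrtOld_mul_self hP, psdSqrtOld_mul_self hQ]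

private lemma aux_traceNorm_kron (A : Matrix l m ℂ) (B : Matrix p' q' ℂ) :
    traceNorm (A ⊗ₖ B) = traceNorm A * traceNorm B := by
  have hA := Matrix.posSemidef_conjTranspose_mul_self A
  have hB := Matrix.posSemidef_conjTranspose_mul_self B
  have h : (A ⊗ₖ B)ᴴ * (A ⊗ₖ B) = (Aᴴ * A) ⊗ₖ (Bᴴ * B) := by
    rw [aux_kron_conjTranspose, Matrix.mul_kronecker_mul]
  rw [aux_traceNorm_eq (A ⊗ₖ B) (aux_psd_kron hA hB) h, aux_sqrt_kron hA hB,
    Matrix.trace_kronecker]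
  unfold traceNorm
  rw [Complex.mul_re, aux_im_trace_sqrt hA, aux_im_trace_sqrt hB]
  ring

private lemma aux_sqrt_transpose {P : Matrix l l ℂ} (hP : P.PosSemidef) :
    (psdSqrtOld (hP.transpose)) = (psdSqrtOld hP)ᵀ := by
  refine (psdEqSqrt (psdSqrtOld_posSemidef hP).transpose _ ?_).symm
  rw [pow_two, ← Matrix.transpose_mul, ← pow_two, psdSqrtOld_sq hP]

private lemma aux_traceNorm_transpose (A : Matrix l m ℂ) :
    traceNorm Aᵀ = traceNorm A := by
  have hA := Matrix.posSemidef_self_mul_conjTranspose A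
  have h : (Aᵀ)ᴴ * Aᵀ = (A * Aᴴ)ᵀ := by
    rw [Matrix.transpose_mul, aux_ct_t]
  rw [aux_traceNorm_eq Aᵀ hA.transpose h, aux_sqrt_transpose hA, Matrix.trace_transpose,
    ← aux_trace_sqrt_swap A]
  rfl

private lemma aux_traceNorm_conj (B : Matrix l m ℂ) :
    traceNorm ((Bᴴ)ᵀ) = traceNorm B := by
  have hB := Matrix.posSemidef_conjTranspose_mul_self B
  have h : ((Bᴴ)ᵀ)ᴴ * (Bᴴ)ᵀ = (Bᴴ * B)ᵀ := by
    rw [← aux_ct_t, Matrix.conjTranspose_conjTranspose, Matrix.transpose_mul, aux_ct_t]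
  rw [aux_traceNorm_eq ((Bᴴ)ᵀ) hB.transpose h, aux_sqrt_transpose hB, Matrix.trace_transpose]
  rfl

private lemma aux_traceNorm_submatrix (N : Matrix l m ℂ) (e : m' ≃ m) :
    traceNorm (N.submatrix id ⇑e) = traceNorm N := by
  have hN := Matrix.posSemidef_conjTranspose_mul_self N
  have h : (N.submatrix id ⇑e)ᴴ * (N.submatrix id ⇑e) = (Nᴴ * N).submatrix ⇑e ⇑e := by
    rw [Matrix.conjTranspose_submatrix]
    have := Matrix.submatrix_mul_equiv Nᴴ N ⇑e (Equiv.refl l) ⇑e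
    simpa using this
  have hsq : (psdSqrtOld (hN.submatrix ⇑e)) = (psdSqrtOld hN).submatrix ⇑e ⇑e := by
    refine (psdEqSqrt ((psdSqrtOld_posSemidef hN).submatrix ⇑e) _ ?_).symm
    rw [pow_two, Matrix.submatrix_mul_equiv (psdSqrtOld hN) (psdSqrtOld hN) ⇑e e ⇑e, ← pow_two, psdSqrtOld_sq hN]
  rw [aux_traceNorm_eq _ (hN.submatrix ⇑e) h, hsq]
  unfold traceNorm
  congr 2
  unfold Matrix.trace
  simp only [Matrix.diag, Matrix.submatrix_apply]
  exact Equiv.sum_comp e fun i => (psdSqrtOld hN) i i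

end AuxLemmas2

/-- Proposition 1 (Vidal–Werner): the trace norm of the partial transpose of
`vec(A) vec(B)*` equals `‖A‖₁ ‖B‖₁`. -/
theorem stmt0 (n m : ℕ) (A B : Matrix (Fin n) (Fin m) ℂ) :
    traceNorm (ptranspose (outer (fun p : Fin n × Fin m => A p.1 p.2)
      (fun p : Fin n × Fin m => B p.1 p.2))) = traceNorm A * traceNorm B := by
  classical
  set Bc : Matrix (Fin n) (Fin m) ℂ := (Bᴴ)ᵀ with hBc
  set N : Matrix (Fin n × Fin m) (Fin m × Fin n) ℂ := Bc ⊗ₖ Aᵀ with hN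
  have hM : ptranspose (outer (fun p : Fin n × Fin m => A p.1 p.2)
      (fun p : Fin n × Fin m => B p.1 p.2))
      = N.submatrix id ⇑(Equiv.prodComm (Fin n) (Fin m)) := by
    ext ⟨p1, p2⟩ ⟨q1, q2⟩
    simp only [ptranspose, outer, hN, hBc, Matrix.of_apply, Matrix.submatrix_apply,
      Equiv.prodComm_apply, Prod.swap_prod_mk, Matrix.kroneckerMap_apply, id_eq,
      Matrix.transpose_apply, Matrix.conjTranspose_apply]
    ring
  rw [hM, aux_traceNorm_submatrix, aux_traceNorm_kron, aux_traceNorm_conj,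
    aux_traceNorm_transpose, mul_comm]
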